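/- arXiv:2009.11855 — 4 statements merged into one kernel-verified Lean document; each statement's English description precedes it below -/
import Mathlib

section
/- Suppose there exists a nonnegative finite Borel measure w₀ on 𝕋 that is feasible. Then the solution set of (BPC) is exactly the set of nonnegative feasible measures: a feasible signed measure w is a solution of (BPC) if and only if w is nonnegative. -/
open MeasureTheory Complex Real Matrix
open scoped Real ComplexOrder

noncomputable section

instance : Fact (0 < 2 * π) := ⟨by positivity⟩

/-- The circle `𝕋 = ℝ/2πℤ`. -/
abbrev Circle2pi := AddCircle (2 * π)

/-- The `k`-th Fourier coefficient of a finite signed Borel measure `w` on `𝕋`: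
`ŵ[k] = ∫ e^{-ikt} dw⁺(t) - ∫ e^{-ikt} dw⁻(t)`, where `w = w⁺ - w⁻` is the Jordan
decomposition. -/
noncomputable def sFourierCoeff (w : MeasureTheory.SignedMeasure Circle2pi) (k : ℤ) : ℂ :=
  (∫ t, fourier (-k) t ∂w.toJordanDecomposition.posPart)
    - ∫ t, fourier (-k) t ∂w.toJordanDecomposition.negPart

/-- The total variation norm `‖w‖ = w⁺(𝕋) + w⁻(𝕋)`. -/
noncomputable def tvNorm (w : MeasureTheory.SignedMeasure Circle2pi) : ℝ :=
  (w.totalVariation Set.univ).toReal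

/-- `w` is feasible for the data `y` : `ŵ[k] = y k` for all `|k| ≤ K_c`. -/
def Feasible (Kc : ℕ) (y : ℤ → ℂ) (w : MeasureTheory.SignedMeasure Circle2pi) : Prop :=
  ∀ k : ℤ, |k| ≤ (Kc : ℤ) → sFourierCoeff w k = y k

/-- `w` is a solution of the problem (BPC): it is feasible and minimizes the total
variation norm among feasible measures. -/
def IsBPCSolution (Kc : ℕ) (y : ℤ → ℂ) (w : MeasureTheory.SignedMeasure Circle2pi) : Prop :=
  Feasible Kc y w ∧ ∀ v : MeasureTheory.SignedMeasure Circle2pi, Feasible Kc y v →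
    tvNorm w ≤ tvNorm v


private lemma coeff_zero (w : MeasureTheory.SignedMeasure Circle2pi) :
    sFourierCoeff w 0 =
      ((w.toJordanDecomposition.posPart Set.univ).toReal : ℂ)
        - ((w.toJordanDecomposition.negPart Set.univ).toReal : ℂ) := by
  have h : ∀ μ : Measure Circle2pi, IsFiniteMeasure μ →
      ∫ t, fourier (-(0 : ℤ)) t ∂μ = ((μ Set.univ).toReal : ℂ) := by
    intro μ _
    simp [fourier_zero, integral_const, measureReal_def]
  rw [sFourierCoeff, h _ inferInstance, h _ inferInstance]

private lemma tvNorm_eq (w : MeasureTheory.SignedMeasure Circle2pi) :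
    tvNorm w = (w.toJordanDecomposition.posPart Set.univ).toReal
      + (w.toJordanDecomposition.negPart Set.univ).toReal := by
  rw [tvNorm, SignedMeasure.totalVariation, Measure.add_apply,
    ENNReal.toReal_add (measure_ne_top _ _) (measure_ne_top _ _)]

private lemma apply_eq (w : MeasureTheory.SignedMeasure Circle2pi) {i : Set Circle2pi}
    (hi : MeasurableSet i) :
    w i = (w.toJordanDecomposition.posPart i).toReal
      - (w.toJordanDecomposition.negPart i).toReal := by
  conv_lhs => rw [← w.toSignedMeasure_toJordanDecomposition]
  rw [JordanDecomposition.toSignedMeasure, VectorMeasure.sub_apply,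
    Measure.toSignedMeasure_apply_measurable hi, Measure.toSignedMeasure_apply_measurable hi]
  rw [measureReal_def, measureReal_def]

private lemma smNonnegIff (w : MeasureTheory.SignedMeasure Circle2pi) :
    0 ≤ w ↔ w.toJordanDecomposition.negPart Set.univ = 0 := by
  constructor
  · intro hw
    obtain ⟨S, hSm, -, -, hpos, hneg⟩ :=
      w.toJordanDecomposition.exists_compl_positive_negative
    have hwS : (0 : ℝ) ≤ w S := by
      have := (VectorMeasure.le_iff.mp hw) S hSm
      simpa using this
    have hSzero : w.toJordanDecomposition.negPart S = 0 := by
      rw [apply_eq w hSm, hpos] at hwS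
      have h1 : (w.toJordanDecomposition.negPart S).toReal ≤ 0 := by
        simpa using hwS
      have h2 : (0:ℝ) ≤ (w.toJordanDecomposition.negPart S).toReal :=
        ENNReal.toReal_nonneg
      have : (w.toJordanDecomposition.negPart S).toReal = 0 := le_antisymm h1 h2
      exact (ENNReal.toReal_eq_zero_iff _).mp this |>.resolve_right (measure_ne_top _ _)
    have : w.toJordanDecomposition.negPart Set.univ ≤
        w.toJordanDecomposition.negPart S + w.toJordanDecomposition.negPart Sᶜ := by
      rw [← Set.union_compl_self S]
      exact measure_union_le _ _
    rw [hSzero, hneg, add_zero] at this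
    exact le_antisymm this zero_le
  · intro h
    rw [VectorMeasure.le_iff]
    intro i hi
    have hzero : w.toJordanDecomposition.negPart i = 0 :=
      le_antisymm (h ▸ measure_mono (Set.subset_univ i)) zero_le
    rw [VectorMeasure.zero_apply, apply_eq w hi, hzero]
    simp [ENNReal.toReal_nonneg]

/-- If there exists a nonnegative feasible measure, then the solution set of (BPC) is
exactly the set of nonnegative feasible measures. -/
theorem solution_iff_nonneg_of_exists_nonneg_feasible (Kc : ℕ) (hKc : 1 ≤ Kc) (y : ℤ → ℂ)
    (hsym : ∀ k : ℤ, |k| ≤ (Kc : ℤ) → y (-k) = starRingEnd ℂ (y k))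
    (w₀ : MeasureTheory.SignedMeasure Circle2pi) (hpos : 0 ≤ w₀)
    (hfeas : Feasible Kc y w₀) :
    ∀ w : MeasureTheory.SignedMeasure Circle2pi, Feasible Kc y w →
      (IsBPCSolution Kc y w ↔ 0 ≤ w) := by
  intro w hw
  set pw := (w.toJordanDecomposition.posPart Set.univ).toReal with hpw
  set nw := (w.toJordanDecomposition.negPart Set.univ).toReal with hnw
  have h0 : (0:ℤ) ≤ (Kc:ℤ) := by positivity
  have habs : |(0:ℤ)| ≤ (Kc:ℤ) := by simpa using h0
  -- w₀ has zero negative part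
  have hneg0 : w₀.toJordanDecomposition.negPart Set.univ = 0 := (smNonnegIff w₀).mp hpos
  -- Fourier coefficient at 0 identities
  have hy0 : (y 0).re = pw - nw := by
    have := hw 0 habs
    rw [coeff_zero] at this
    rw [← this]
    simp [pw, nw]
  have hy0' : (y 0).re = (w₀.toJordanDecomposition.posPart Set.univ).toReal := by
    have := hfeas 0 habs
    rw [coeff_zero] at this
    rw [← this, hneg0]
    simp
  have htv0 : tvNorm w₀ = (y 0).re := by
    rw [tvNorm_eq, hneg0, hy0']; simp
  -- Any feasible v has tvNorm v ≥ (y 0).re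
  have hlb : ∀ v : MeasureTheory.SignedMeasure Circle2pi, Feasible Kc y v →
      (y 0).re ≤ tvNorm v := by
    intro v hv
    have h1 : (y 0).re = (v.toJordanDecomposition.posPart Set.univ).toReal
        - (v.toJordanDecomposition.negPart Set.univ).toReal := by
      have := hv 0 habs
      rw [coeff_zero] at this
      rw [← this]; simp
    rw [h1, tvNorm_eq]
    have := ENNReal.toReal_nonneg (a := v.toJordanDecomposition.negPart Set.univ)
    linarith
  constructor
  · rintro ⟨-, hmin⟩
    have h1 : tvNorm w ≤ (y 0).re := htv0 ▸ hmin w₀ hfeas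
    rw [tvNorm_eq, ← hpw, ← hnw] at h1
    rw [hy0] at h1
    have hn0 : nw = 0 := le_antisymm (by linarith) ENNReal.toReal_nonneg
    rw [smNonnegIff]
    exact ((ENNReal.toReal_eq_zero_iff _).mp hn0).resolve_right (measure_ne_top _ _)
  · intro hwpos
    refine ⟨hw, fun v hv => ?_⟩
    have hnegw : w.toJordanDecomposition.negPart Set.univ = 0 := (smNonnegIff w).mp hwpos
    have : tvNorm w = (y 0).re := by
      rw [tvNorm_eq, ← hpw, hnegw, hy0]
      simp [hnegw, nw]
    rw [this]
    exact hlb v hv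
end
end

section
/- If the Hermitian Toeplitz matrix T_y ∈ ℂ^{(K_c+1)×(K_c+1)} is positive semidefinite, then there exists a nonnegative finite Borel measure μ on 𝕋 with μ̂[k] = y_k for all 0 ≤ k ≤ K_c. -/
open MeasureTheory Complex Real Matrix
open scoped Real ComplexOrder
open scoped InnerProductSpace ComplexConjugate NNReal ENNReal

noncomputable section

/-- The Hermitian Toeplitz matrix `T_y` with entries `(T_y)_{i,j} = y_{j-i}`. -/
def Ty (Kc : ℕ) (y : ℤ → ℂ) : Matrix (Fin (Kc + 1)) (Fin (Kc + 1)) ℂ :=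
  Matrix.of fun i j => y ((j : ℤ) - (i : ℤ))

section AuxIso

variable {V : Type*} [NormedAddCommGroup V] [InnerProductSpace ℂ V] [FiniteDimensional ℂ V]

lemma isometry_maxGen_le_eigen (E : V →ₗ[ℂ] V)
    (hE : ∀ v w : V, ⟪E v, E w⟫_ℂ = ⟪v, w⟫_ℂ) (μ : ℂ) :
    Module.End.maxGenEigenspace E μ ≤ Module.End.eigenspace E μ := by
  classical
  set Sa := LinearMap.adjoint E with hSa
  have hSE : Sa * E = 1 := by
    ext v
    refine ext_inner_left ℂ (fun w => ?_)
    simp only [Module.End.mul_apply, Module.End.one_apply]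
    rw [LinearMap.adjoint_inner_right, hE]
  have hES : E * Sa = 1 := mul_eq_one_comm.mp hSE
  set B : V →ₗ[ℂ] V := E - μ • 1 with hB
  set Bs : V →ₗ[ℂ] V := Sa - (conj μ) • 1 with hBs
  have had1 : ∀ v w : V, ⟪B v, w⟫_ℂ = ⟪v, Bs w⟫_ℂ := by
    intro v w
    simp only [hB, hBs, LinearMap.sub_apply, LinearMap.smul_apply, Module.End.one_apply,
      inner_sub_left, inner_sub_right, inner_smul_left, inner_smul_right]
    rw [← LinearMap.adjoint_inner_right E]
  have had2 : ∀ v w : V, ⟪Bs v, w⟫_ℂ = ⟪v, B w⟫_ℂ := by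
    intro v w
    simp only [hB, hBs, LinearMap.sub_apply, LinearMap.smul_apply, Module.End.one_apply,
      inner_sub_left, inner_sub_right, inner_smul_left, inner_smul_right]
    rw [← LinearMap.adjoint_inner_left E]
    simp [hSa]
  have hcomm : Bs * B = B * Bs := by
    simp only [hB, hBs, sub_mul, mul_sub, smul_mul_assoc, mul_smul_comm, one_mul, mul_one,
      hSE, hES, smul_smul, smul_sub]
    module
  have hnorm : ∀ v : V, ⟪Bs v, Bs v⟫_ℂ = ⟪B v, B v⟫_ℂ := by
    intro v
    calc ⟪Bs v, Bs v⟫_ℂ = ⟪v, B (Bs v)⟫_ℂ := had2 v (Bs v)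
    _ = ⟪v, (B * Bs) v⟫_ℂ := rfl
    _ = ⟪v, (Bs * B) v⟫_ℂ := by rw [hcomm]
    _ = ⟪v, Bs (B v)⟫_ℂ := rfl
    _ = ⟪B v, B v⟫_ℂ := (had1 v (B v)).symm
  have kerstep : ∀ v : V, B (B v) = 0 → B v = 0 := by
    intro v h
    have h1 : Bs (B v) = 0 := by
      have := hnorm (B v)
      rw [h, inner_zero_left] at this
      exact inner_self_eq_zero.mp this
    have h2 : ⟪B v, B v⟫_ℂ = 0 := by
      rw [had1 v (B v), h1, inner_zero_right]
    exact inner_self_eq_zero.mp h2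
  have hpow : ∀ (l : ℕ) (v : V), (B ^ (l + 1)) v = 0 → B v = 0 := by
    intro l
    induction l with
    | zero => intro v h; simpa using h
    | succ l ih =>
      intro v h
      have h' : (B ^ (l + 1)) (B v) = 0 := by
        have heq : B ^ (l + 1 + 1) = B ^ (l + 1) * B := pow_succ B (l + 1)
        rw [heq] at h
        exact h
      exact kerstep v (ih (B v) h')
  intro x hx
  rw [Module.End.mem_maxGenEigenspace] at hx
  obtain ⟨k, hk⟩ := hx
  rw [Module.End.mem_eigenspace_iff]
  match k with
  | 0 => simp only [pow_zero, Module.End.one_apply] at hk; simp [hk]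
  | k + 1 =>
    have h1 : B x = 0 := hpow k x hk
    have h2 : E x - μ • x = 0 := by
      simpa [hB, LinearMap.sub_apply] using h1
    exact sub_eq_zero.mp h2

end AuxIso

open scoped MatrixOrder in
lemma psd_eq_conjTranspose_mul_self' {n : ℕ} {A : Matrix (Fin n) (Fin n) ℂ} (h : A.PosSemidef) :
    ∃ B : Matrix (Fin n) (Fin n) ℂ, A = Bᴴ * B := by
  obtain ⟨B, hB⟩ := CStarAlgebra.nonneg_iff_eq_star_mul_self.mp h.nonneg
  exact ⟨B, hB⟩

/-- If the Hermitian Toeplitz matrix `T_y` is positive semidefinite, then there exists a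
nonnegative finite Borel measure `μ` on `𝕋` with `μ̂[k] = y k` for all `0 ≤ k ≤ K_c`. -/
theorem exists_nonneg_measure_of_Ty_posSemidef (Kc : ℕ) (hKc : 1 ≤ Kc) (y : ℤ → ℂ)
    (hsym : ∀ k : ℤ, |k| ≤ (Kc : ℤ) → y (-k) = starRingEnd ℂ (y k))
    (hpsd : (Ty Kc y).PosSemidef) :
    ∃ μ : MeasureTheory.Measure Circle2pi, MeasureTheory.IsFiniteMeasure μ ∧
      ∀ k : ℤ, 0 ≤ k → k ≤ (Kc : ℤ) → ∫ t, fourier (-k) t ∂μ = y k := by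
  classical
  obtain ⟨Bm, hBm⟩ := psd_eq_conjTranspose_mul_self' hpsd
  -- the Gram vectors
  let f : Fin (Kc + 1) → EuclideanSpace ℂ (Fin (Kc + 1)) := fun j => WithLp.toLp 2 (fun i => Bm i j)
  have hGram : ∀ i j : Fin (Kc + 1), ⟪f i, f j⟫_ℂ = y ((j : ℤ) - (i : ℤ)) := by
    intro i j
    have h1 : ⟪f i, f j⟫_ℂ = (Bmᴴ * Bm) i j := by
      simp [f, PiLp.inner_apply, RCLike.inner_apply, Matrix.mul_apply,
        Matrix.conjTranspose_apply, mul_comm]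
    rw [h1, ← hBm]
    rfl
  -- shift maps
  let φ : (Fin Kc → ℂ) →ₗ[ℂ] EuclideanSpace ℂ (Fin (Kc + 1)) :=
    { toFun := fun c => ∑ j : Fin Kc, c j • f j.castSucc
      map_add' := by
        intro a b
        simp [add_smul, Finset.sum_add_distrib]
      map_smul' := by
        intro m a
        simp [smul_smul, Finset.smul_sum] }
  let ψ : (Fin Kc → ℂ) →ₗ[ℂ] EuclideanSpace ℂ (Fin (Kc + 1)) :=
    { toFun := fun c => ∑ j : Fin Kc, c j • f j.succ
      map_add' := by
        intro a b
        simp [add_smul, Finset.sum_add_distrib]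
      map_smul' := by
        intro m a
        simp [smul_smul, Finset.smul_sum] }
  have key : ∀ c d : Fin Kc → ℂ, ⟪φ c, φ d⟫_ℂ = ⟪ψ c, ψ d⟫_ℂ := by
    intro c d
    simp only [φ, ψ, LinearMap.coe_mk, AddHom.coe_mk, sum_inner, inner_sum,
      inner_smul_left, inner_smul_right, hGram]
    refine Finset.sum_congr rfl fun j _ => congrArg _ (Finset.sum_congr rfl fun l _ => ?_)
    have harg : ((j.castSucc : Fin (Kc + 1)) : ℤ) - ((l.castSucc : Fin (Kc + 1)) : ℤ)
        = ((j.succ : Fin (Kc + 1)) : ℤ) - ((l.succ : Fin (Kc + 1)) : ℤ) := by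
      simp [Fin.coe_castSucc, Fin.val_succ]
    rw [harg]
  have hker : LinearMap.ker φ ≤ LinearMap.ker ψ := by
    intro c hc
    rw [LinearMap.mem_ker] at hc ⊢
    refine inner_self_eq_zero (𝕜 := ℂ).mp ?_
    rw [← key c c, hc, inner_zero_left]
  -- the partial shift isometry on the range of φ
  let ξ : LinearMap.range φ →ₗ[ℂ] EuclideanSpace ℂ (Fin (Kc + 1)) :=
    (Submodule.liftQ (LinearMap.ker φ) ψ hker) ∘ₗ
      (LinearMap.quotKerEquivRange φ).symm.toLinearMap
  have hξ : ∀ c : Fin Kc → ℂ, ξ ⟨φ c, LinearMap.mem_range_self φ c⟩ = ψ c := by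
    intro c
    have h1 : (LinearMap.quotKerEquivRange φ).symm ⟨φ c, LinearMap.mem_range_self φ c⟩
        = (LinearMap.ker φ).mkQ c := φ.quotKerEquivRange_symm_apply_image c _
    simp only [ξ, LinearMap.comp_apply, LinearEquiv.coe_toLinearMap, h1]
    rw [Submodule.mkQ_apply, Submodule.liftQ_apply]
  have hiso : ∀ v : LinearMap.range φ, ‖ξ v‖ = ‖(v : EuclideanSpace ℂ (Fin (Kc + 1)))‖ := by
    rintro ⟨-, ⟨c, rfl⟩⟩
    rw [hξ c]
    have h2 : (‖ψ c‖ : ℝ) ^ 2 = (‖φ c‖ : ℝ) ^ 2 := by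
      rw [← inner_self_eq_norm_sq (𝕜 := ℂ), ← inner_self_eq_norm_sq (𝕜 := ℂ), key]
    rw [← Real.sqrt_sq (norm_nonneg (ψ c)), ← Real.sqrt_sq (norm_nonneg (φ c)), h2]
  let Viso : LinearMap.range φ →ₗᵢ[ℂ] EuclideanSpace ℂ (Fin (Kc + 1)) := ⟨ξ, hiso⟩
  let U : EuclideanSpace ℂ (Fin (Kc + 1)) →ₗᵢ[ℂ] EuclideanSpace ℂ (Fin (Kc + 1)) := Viso.extend
  let E : EuclideanSpace ℂ (Fin (Kc + 1)) →ₗ[ℂ] EuclideanSpace ℂ (Fin (Kc + 1)) := U.toLinearMap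
  have hEinner : ∀ v w : EuclideanSpace ℂ (Fin (Kc + 1)), ⟪E v, E w⟫_ℂ = ⟪v, w⟫_ℂ := by
    intro v w
    exact U.inner_map_map v w
  have hstep : ∀ j : Fin Kc, E (f j.castSucc) = f j.succ := by
    intro j
    have h1 : φ (Pi.single j 1) = f j.castSucc := by
      simp [φ, Pi.single_apply]
    have h2 : ψ (Pi.single j 1) = f j.succ := by
      simp [ψ, Pi.single_apply]
    have h3 := Viso.extend_apply ⟨φ (Pi.single j 1), LinearMap.mem_range_self φ _⟩
    calc E (f j.castSucc) = U (φ (Pi.single j 1)) := by rw [h1]; rfl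
    _ = Viso ⟨φ (Pi.single j 1), LinearMap.mem_range_self φ _⟩ := h3
    _ = ψ (Pi.single j 1) := hξ _
    _ = f j.succ := h2
  have hpow : ∀ m : ℕ, (hm : m ≤ Kc) → (E ^ m) (f 0) = f ⟨m, by omega⟩ := by
    intro m
    induction m with
    | zero =>
      intro _
      simp only [pow_zero, Module.End.one_apply]
      congr 1
    | succ m ih =>
      intro hm
      have hm' : m ≤ Kc := by omega
      have h1 : (E ^ (m + 1)) (f 0) = E ((E ^ m) (f 0)) := by
        rw [pow_succ', Module.End.mul_apply]
      rw [h1, ih hm']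
      have hj : (⟨m, by omega⟩ : Fin (Kc + 1)) = (⟨m, by omega⟩ : Fin Kc).castSucc := by
        ext; rfl
      have hj' : (⟨m + 1, by omega⟩ : Fin (Kc + 1)) = (⟨m, by omega⟩ : Fin Kc).succ := by
        ext; rfl
      rw [hj, hstep, ← hj']
  -- eigendecomposition of f 0
  have htop : (⨆ μ : ℂ, Module.End.eigenspace E μ) = ⊤ := by
    rw [eq_top_iff, ← Module.End.iSup_maxGenEigenspace_eq_top E]
    exact iSup_mono fun μ => isometry_maxGen_le_eigen E hEinner μ
  have hx : f 0 ∈ ⨆ μ : ℂ, Module.End.eigenspace E μ := by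
    rw [htop]; trivial
  obtain ⟨g, hg_mem, hg_sum⟩ := (Submodule.mem_iSup_iff_exists_finsupp _ _).mp hx
  have heig : ∀ μ : ℂ, E (g μ) = μ • g μ := fun μ =>
    Module.End.mem_eigenspace_iff.mp (hg_mem μ)
  have hpoweig : ∀ (μ : ℂ) (m : ℕ), (E ^ m) (g μ) = μ ^ m • g μ := by
    intro μ m
    induction m with
    | zero => simp
    | succ m ih =>
      rw [pow_succ', Module.End.mul_apply, ih, E.map_smul, heig, smul_smul, pow_succ', mul_comm]
  have hmod : ∀ μ ∈ g.support, ‖μ‖ = 1 := by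
    intro μ hμ
    have hne : g μ ≠ 0 := Finsupp.mem_support_iff.mp hμ
    have h1 : ‖E (g μ)‖ = ‖g μ‖ := U.norm_map (g μ)
    rw [heig, norm_smul] at h1
    have h2 : ‖g μ‖ ≠ 0 := norm_ne_zero_iff.mpr hne
    field_simp at h1
    exact h1
  have horth : ∀ μ ∈ g.support, ∀ ν ∈ g.support, μ ≠ ν → ⟪g μ, g ν⟫_ℂ = 0 := by
    intro μ hμ ν hν hne
    by_contra hc
    have h1 : ⟪E (g μ), E (g ν)⟫_ℂ = ⟪g μ, g ν⟫_ℂ := hEinner _ _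
    rw [heig, heig, inner_smul_left, inner_smul_right] at h1
    have h2 : conj μ * ν = 1 := by
      have h3 : (conj μ * ν - 1) * ⟪g μ, g ν⟫_ℂ = 0 := by linear_combination h1
      rcases mul_eq_zero.mp h3 with h | h
      · linear_combination h
      · exact absurd h hc
    have hcm : conj μ * μ = 1 := by
      have h4 : conj μ * μ = ((‖μ‖ : ℂ)) ^ 2 := by
        rw [mul_comm, Complex.mul_conj, Complex.normSq_eq_norm_sq]
        push_cast
        ring
      rw [h4, hmod μ hμ]
      norm_num
    have hcμ : conj μ ≠ 0 := by
      intro h0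
      rw [h0, zero_mul] at hcm
      exact zero_ne_one hcm
    exact hne (mul_left_cancel₀ hcμ (hcm.trans h2.symm))
  have hinorm : ∀ μ : ℂ, ⟪g μ, g μ⟫_ℂ = ((‖g μ‖ ^ 2 : ℝ) : ℂ) := by
    intro μ
    rw [inner_self_eq_norm_sq_to_K (𝕜 := ℂ)]
    norm_cast
  -- the moment identity
  have hmom : ∀ m : ℕ, m ≤ Kc →
      (∑ μ ∈ g.support, μ ^ m * ((‖g μ‖ ^ 2 : ℝ) : ℂ)) = y (m : ℤ) := by
    intro m hm
    have h1 : ⟪f 0, f ⟨m, by omega⟩⟫_ℂ = y (m : ℤ) := by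
      have h2 := hGram 0 ⟨m, by omega⟩
      simpa using h2
    have h3 : ⟪f 0, f ⟨m, by omega⟩⟫_ℂ = ∑ μ ∈ g.support, μ ^ m * ((‖g μ‖ ^ 2 : ℝ) : ℂ) := by
      rw [← hpow m hm, ← hg_sum, Finsupp.sum, map_sum, inner_sum]
      refine Finset.sum_congr rfl fun ν hν => ?_
      rw [hpoweig ν m, inner_smul_right, sum_inner]
      rw [Finset.sum_eq_single_of_mem ν hν (fun μ hμ hne => horth μ hμ ν hν hne)]
      rw [hinorm ν]
    rw [← h1, h3]
  -- the measure: atoms at -arg μ with weights ‖g μ‖²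
  let ρ : ℂ → ℝ≥0∞ := fun μ => ((‖g μ‖₊ ^ 2 : ℝ≥0) : ℝ≥0∞)
  let θ : ℂ → Circle2pi := fun μ => ((-(Complex.arg μ) : ℝ) : Circle2pi)
  refine ⟨∑ μ ∈ g.support, ρ μ • MeasureTheory.Measure.dirac (θ μ), ?_, ?_⟩
  · constructor
    rw [Measure.finset_sum_apply]
    refine ENNReal.sum_lt_top.mpr fun μ _ => ?_
    rw [Measure.smul_apply, smul_eq_mul]
    calc ρ μ * MeasureTheory.Measure.dirac (θ μ) Set.univ ≤ ρ μ * 1 := by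
          exact mul_le_mul_right (MeasureTheory.measure_mono (Set.subset_univ _) |>.trans
            (by simp)) _
    _ < ⊤ := by
          rw [mul_one]
          exact ENNReal.coe_lt_top
  · intro k hk0 hkK
    obtain ⟨m, rfl⟩ : ∃ m : ℕ, k = (m : ℤ) := ⟨k.toNat, (Int.toNat_of_nonneg hk0).symm⟩
    have hm : m ≤ Kc := by exact_mod_cast hkK
    have hintd : ∀ μ : ℂ, MeasureTheory.Integrable (fun t : Circle2pi => (fourier (-(m : ℤ)) t : ℂ))
        (MeasureTheory.Measure.dirac (θ μ)) := by
      intro μ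
      constructor
      · exact (map_continuous (fourier (-(m : ℤ)))).aestronglyMeasurable
      · rw [MeasureTheory.HasFiniteIntegral]
        rw [MeasureTheory.lintegral_dirac]
        exact ENNReal.coe_lt_top
    have hint : ∀ μ ∈ g.support, MeasureTheory.Integrable
        (fun t : Circle2pi => (fourier (-(m : ℤ)) t : ℂ))
        (ρ μ • MeasureTheory.Measure.dirac (θ μ)) := by
      intro μ _
      exact (hintd μ).smul_measure ENNReal.coe_ne_top
    rw [MeasureTheory.integral_finset_sum_measure hint]
    have hterm : ∀ μ ∈ g.support,
        (∫ t, (fourier (-(m : ℤ)) t : ℂ) ∂(ρ μ • MeasureTheory.Measure.dirac (θ μ)))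
          = μ ^ m * ((‖g μ‖ ^ 2 : ℝ) : ℂ) := by
      intro μ hμ
      rw [MeasureTheory.integral_smul_measure, MeasureTheory.integral_dirac]
      have hρ : (ρ μ).toReal = ‖g μ‖ ^ 2 := by
        simp [ρ]
      have hfour : (fourier (-(m : ℤ)) (θ μ) : ℂ) = μ ^ m := by
        have h1 : (fourier (-(m : ℤ)) (θ μ) : ℂ)
            = Complex.exp (2 * π * Complex.I * (-(m : ℤ)) * (-(Complex.arg μ)) / (2 * π)) :=
          by exact_mod_cast (fourier_coe_apply (n := -(m : ℤ)) (x := -(Complex.arg μ)))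
        rw [h1]
        have h2 : (2 * (π : ℂ) * Complex.I * (-(m : ℤ)) * (-(Complex.arg μ)) / (2 * π))
            = (m : ℂ) * ((Complex.arg μ) * Complex.I) := by
          have hπ : (π : ℂ) ≠ 0 := Complex.ofReal_ne_zero.mpr Real.pi_ne_zero
          field_simp
          push_cast
          ring
        rw [h2, Complex.exp_nat_mul]
        congr 1
        have h3 : ((‖μ‖ : ℝ) : ℂ) * Complex.exp ((Complex.arg μ) * Complex.I) = μ :=
          Complex.norm_mul_exp_arg_mul_I μ
        have h4 : ‖μ‖ = 1 := by
          exact hmod μ hμ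
        rw [h4] at h3
        simpa using h3
      rw [hρ, hfour, Complex.real_smul]
      push_cast
      ring
    rw [Finset.sum_congr rfl hterm]
    exact hmom m hm
end
end

section
/- If the Hermitian Toeplitz matrix T_y is positive definite (or negative definite), then no solution of (BPC) is a sum of fewer than K_c+1 Dirac masses: there is no solution of the form Σ_{i=1}^N a_i δ_{x_i} with N ≤ K_c, nonzero real a_i and pairwise distinct x_i ∈ 𝕋. -/
open MeasureTheory Complex Real Matrix
open scoped Real ComplexOrder

noncomputable section

/-- The Dirac measure at `x ∈ 𝕋`, viewed as a signed measure. -/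
noncomputable def diracSM (x : Circle2pi) : MeasureTheory.SignedMeasure Circle2pi :=
  (MeasureTheory.Measure.dirac x).toSignedMeasure

open scoped ENNReal NNReal in
lemma integrable_cont_finite (f : Circle2pi → ℂ) (hf : Continuous f)
    (μ : Measure Circle2pi) [IsFiniteMeasure μ] : Integrable f μ :=
  hf.integrable_of_hasCompactSupport (HasCompactSupport.of_compactSpace f)

lemma integral_sub_of_measure_eq {μ1 ν1 μ2 ν2 : Measure Circle2pi}
    (h : μ1 + ν2 = μ2 + ν1) (f : Circle2pi → ℂ)
    (h1 : Integrable f μ1) (h2 : Integrable f ν1) (h3 : Integrable f μ2)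
    (h4 : Integrable f ν2) :
    (∫ t, f t ∂μ1) - ∫ t, f t ∂ν1 = (∫ t, f t ∂μ2) - ∫ t, f t ∂ν2 := by
  have h' : (∫ t, f t ∂(μ1 + ν2)) = ∫ t, f t ∂(μ2 + ν1) := by rw [h]
  rw [integral_add_measure h1 h4, integral_add_measure h3 h2] at h'
  linear_combination h'

lemma toReal_ofReal_max (r : ℝ) : (ENNReal.ofReal r).toReal = max r 0 := by
  rcases le_total r 0 with h' | h'
  · simp [ENNReal.ofReal_eq_zero.2 h', max_eq_right h']
  · rw [ENNReal.toReal_ofReal h', max_eq_left h']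

lemma max_sub_max_neg (r : ℝ) : max r 0 - max (-r) 0 = r := by
  rcases le_total r 0 with h' | h'
  · rw [max_eq_right h', max_eq_left (by linarith)]; ring
  · rw [max_eq_left h', max_eq_right (by linarith)]; ring

lemma sFourierCoeff_sum_dirac {N : ℕ} (x : Fin N → Circle2pi) (a : Fin N → ℝ) (k : ℤ) :
    sFourierCoeff (∑ i, a i • diracSM (x i)) k
      = ∑ i, (a i : ℂ) * fourier (-k) (x i) := by
  classical
  set w : SignedMeasure Circle2pi := ∑ i, a i • diracSM (x i) with hw
  set μ : Measure Circle2pi := ∑ i, ENNReal.ofReal (a i) • Measure.dirac (x i) with hμ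
  set ν : Measure Circle2pi := ∑ i, ENNReal.ofReal (-(a i)) • Measure.dirac (x i) with hν
  have hμfin : ∀ (s : Set Circle2pi), μ s ≠ ⊤ := by
    intro s
    rw [hμ, Measure.finset_sum_apply]
    refine (ENNReal.sum_lt_top.2 fun i _ => ?_).ne
    rw [Measure.smul_apply, smul_eq_mul]
    exact ENNReal.mul_lt_top ENNReal.ofReal_lt_top ((measure_lt_top _ _))
  have hνfin : ∀ (s : Set Circle2pi), ν s ≠ ⊤ := by
    intro s
    rw [hν, Measure.finset_sum_apply]
    refine (ENNReal.sum_lt_top.2 fun i _ => ?_).ne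
    rw [Measure.smul_apply, smul_eq_mul]
    exact ENNReal.mul_lt_top ENNReal.ofReal_lt_top ((measure_lt_top _ _))
  have key : w.toJordanDecomposition.posPart + ν = μ + w.toJordanDecomposition.negPart := by
    ext s hs
    have hws : w s = ∑ i, a i * (if x i ∈ s then (1:ℝ) else 0) := by
      have hcoe : ⇑w = ∑ i, ⇑(a i • diracSM (x i)) := by
        rw [hw]; exact map_sum (FunLike.coeAddMonoidHom (SignedMeasure Circle2pi) (Set Circle2pi) ℝ) _ _
      rw [hcoe, Finset.sum_apply]
      refine Finset.sum_congr rfl fun i _ => ?_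
      rw [VectorMeasure.smul_apply, diracSM, Measure.toSignedMeasure_apply_measurable hs,
        measureReal_def, Measure.dirac_apply' _ hs, smul_eq_mul]
      by_cases h : x i ∈ s <;> simp [h]
    have hws' : w s = (w.toJordanDecomposition.posPart s).toReal
        - (w.toJordanDecomposition.negPart s).toReal := by
      conv_lhs => rw [← w.toSignedMeasure_toJordanDecomposition]
      rw [JordanDecomposition.toSignedMeasure, Measure.toSignedMeasure_sub_apply hs]; rfl
    have hind : ∀ i : Fin N, (s.indicator (1 : Circle2pi → ENNReal) (x i)).toReal
        = if x i ∈ s then (1:ℝ) else 0 := by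
      intro i; by_cases h : x i ∈ s <;> simp [h]
    have hμs : (μ s).toReal = ∑ i, max (a i) 0 * (if x i ∈ s then (1:ℝ) else 0) := by
      rw [hμ, Measure.finset_sum_apply, ENNReal.toReal_sum]
      · refine Finset.sum_congr rfl fun i _ => ?_
        rw [Measure.smul_apply, Measure.dirac_apply' _ hs, smul_eq_mul, ENNReal.toReal_mul,
          toReal_ofReal_max, hind i]
      · intro i _
        rw [Measure.smul_apply, smul_eq_mul]
        exact (ENNReal.mul_lt_top ENNReal.ofReal_lt_top (measure_lt_top _ _)).ne
    have hνs : (ν s).toReal = ∑ i, max (-(a i)) 0 * (if x i ∈ s then (1:ℝ) else 0) := by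
      rw [hν, Measure.finset_sum_apply, ENNReal.toReal_sum]
      · refine Finset.sum_congr rfl fun i _ => ?_
        rw [Measure.smul_apply, Measure.dirac_apply' _ hs, smul_eq_mul, ENNReal.toReal_mul,
          toReal_ofReal_max, hind i]
      · intro i _
        rw [Measure.smul_apply, smul_eq_mul]
        exact (ENNReal.mul_lt_top ENNReal.ofReal_lt_top (measure_lt_top _ _)).ne
    rw [Measure.add_apply, Measure.add_apply]
    refine (ENNReal.toReal_eq_toReal_iff' ?_ ?_).1 ?_
    · exact ENNReal.add_ne_top.2 ⟨measure_ne_top _ _, hνfin s⟩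
    · exact ENNReal.add_ne_top.2 ⟨hμfin s, measure_ne_top _ _⟩
    rw [ENNReal.toReal_add (measure_ne_top _ _) (hνfin s),
      ENNReal.toReal_add (hμfin s) (measure_ne_top _ _), hμs, hνs]
    have hsum : ∑ i, max (a i) 0 * (if x i ∈ s then (1:ℝ) else 0)
        - ∑ i, max (-(a i)) 0 * (if x i ∈ s then (1:ℝ) else 0)
        = ∑ i, a i * (if x i ∈ s then (1:ℝ) else 0) := by
      rw [← Finset.sum_sub_distrib]
      refine Finset.sum_congr rfl fun i _ => ?_
      by_cases h : x i ∈ s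
      · simp only [h, if_true, mul_one]; exact max_sub_max_neg (a i)
      · simp [h]
    rw [hws'] at hws
    linarith
  have hf : Continuous fun t : Circle2pi => (fourier (-k) t : ℂ) := (fourier (-k)).continuous
  have hintd : ∀ i : Fin N, ∀ c : ℝ,
      Integrable (fun t : Circle2pi => (fourier (-k) t : ℂ))
        (ENNReal.ofReal c • Measure.dirac (x i)) := fun i c =>
    (integrable_cont_finite _ hf _).smul_measure ENNReal.ofReal_ne_top
  have hintμ : Integrable (fun t : Circle2pi => (fourier (-k) t : ℂ)) μ := by
    rw [hμ]
    exact integrable_finset_sum_measure.2 fun i _ => hintd i (a i)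
  have hintν : Integrable (fun t : Circle2pi => (fourier (-k) t : ℂ)) ν := by
    rw [hν]
    exact integrable_finset_sum_measure.2 fun i _ => hintd i (-(a i))
  have h1 : sFourierCoeff w k = (∫ t, fourier (-k) t ∂μ) - ∫ t, fourier (-k) t ∂ν := by
    rw [sFourierCoeff]
    exact integral_sub_of_measure_eq key _ (integrable_cont_finite _ hf _)
      (integrable_cont_finite _ hf _) hintμ hintν
  rw [h1, hμ, hν, integral_finset_sum_measure (fun i _ => hintd i (a i)),
    integral_finset_sum_measure (fun i _ => hintd i (-(a i))), ← Finset.sum_sub_distrib]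
  refine Finset.sum_congr rfl fun i _ => ?_
  rw [integral_smul_measure, integral_smul_measure, integral_dirac]
  set c := (ENNReal.ofReal (a i)).toReal with hc
  set d := (ENNReal.ofReal (-(a i))).toReal with hd
  have h1 : c - d = a i := by
    rw [hc, hd, toReal_ofReal_max, toReal_ofReal_max]; exact max_sub_max_neg (a i)
  rw [Complex.real_smul, Complex.real_smul, ← h1]
  push_cast
  ring

/-- If `T_y` is positive definite or negative definite, then no solution of (BPC) is a
sum of fewer than `K_c + 1` Dirac masses. -/
theorem no_sparse_solution_of_Ty_definite (Kc : ℕ) (hKc : 1 ≤ Kc) (y : ℤ → ℂ)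
    (hsym : ∀ k : ℤ, |k| ≤ (Kc : ℤ) → y (-k) = starRingEnd ℂ (y k))
    (hdef : (Ty Kc y).PosDef ∨ (-(Ty Kc y)).PosDef) :
    ¬ ∃ (w : MeasureTheory.SignedMeasure Circle2pi) (N : ℕ) (x : Fin N → Circle2pi)
        (a : Fin N → ℝ),
        IsBPCSolution Kc y w ∧ N ≤ Kc ∧ Function.Injective x ∧ (∀ i, a i ≠ 0) ∧
        w = ∑ i, a i • diracSM (x i) := by
  rintro ⟨w, N, x, a, hsol, hN, hxinj, ha, hwe⟩
  classical
  have hyk : ∀ k : ℤ, |k| ≤ (Kc : ℤ) → y k = ∑ m, (a m : ℂ) * fourier (-k) (x m) := by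
    intro k hk
    rw [← hsol.1 k hk, hwe, sFourierCoeff_sum_dirac]
  -- the vectors u_m and matrix M
  set F : Fin (Kc + 1) → Fin N → ℂ := fun j m => fourier ((j : ℤ)) (x m) with hF
  set M : Matrix (Fin N) (Fin (Kc + 1)) ℂ :=
    Matrix.of fun m j => starRingEnd ℂ (F j m) with hM
  -- a nonzero kernel vector
  obtain ⟨z, hz0, hzne⟩ : ∃ z : Fin (Kc + 1) → ℂ, M *ᵥ z = 0 ∧ z ≠ 0 := by
    by_contra hcon
    push_neg at hcon
    have hker : LinearMap.ker M.mulVecLin = ⊥ := by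
      rw [LinearMap.ker_eq_bot']
      intro m hm
      exact hcon m hm
    have hinj' : Function.Injective M.mulVecLin := LinearMap.ker_eq_bot.mp hker
    have h := LinearMap.finrank_le_finrank_of_injective hinj'
    rw [Module.finrank_fin_fun, Module.finrank_fin_fun] at h
    omega
  -- entries of Ty
  have hTy : ∀ i j : Fin (Kc + 1),
      Ty Kc y i j = ∑ m, (a m : ℂ) * (F i m * starRingEnd ℂ (F j m)) := by
    intro i j
    have hi : (i : ℕ) < Kc + 1 := i.isLt
    have hj : (j : ℕ) < Kc + 1 := j.isLt
    have habs : |(j : ℤ) - (i : ℤ)| ≤ (Kc : ℤ) := by rw [abs_le]; omega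
    have hy := hyk ((j : ℤ) - (i : ℤ)) habs
    rw [Ty, Matrix.of_apply, hy]
    refine Finset.sum_congr rfl fun m _ => ?_
    congr 1
    have hexp : -((j : ℤ) - (i : ℤ)) = (i : ℤ) + -(j : ℤ) := by ring
    rw [hF]
    simp only []
    rw [hexp, fourier_add, fourier_neg]
  -- quadratic form vanishes
  set f : Fin (Kc + 1) → Fin (Kc + 1) → Fin N → ℂ := fun i j m =>
    starRingEnd ℂ (z i) * ((a m : ℂ) * (F i m * starRingEnd ℂ (F j m))) * z j with hf
  have e1 : star z ⬝ᵥ (Ty Kc y) *ᵥ z = ∑ i, ∑ j, ∑ m, f i j m := by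
    simp only [dotProduct, Matrix.mulVec, Pi.star_apply, RCLike.star_def]
    refine Finset.sum_congr rfl fun i _ => ?_
    rw [Finset.mul_sum]
    refine Finset.sum_congr rfl fun j _ => ?_
    rw [hTy i j, Finset.sum_mul, Finset.mul_sum]
    refine Finset.sum_congr rfl fun m _ => ?_
    rw [hf]; ring
  have e2 : (∑ i, ∑ j, ∑ m, f i j m) = ∑ m, ∑ i, ∑ j, f i j m :=
    calc (∑ i, ∑ j, ∑ m, f i j m) = ∑ i, ∑ m, ∑ j, f i j m :=
          Finset.sum_congr rfl fun i _ => Finset.sum_comm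
      _ = ∑ m, ∑ i, ∑ j, f i j m := Finset.sum_comm
  have e3 : (∑ m, ∑ i, ∑ j, f i j m) = 0 := by
    refine Finset.sum_eq_zero fun m _ => ?_
    have hMz : ∑ j, starRingEnd ℂ (F j m) * z j = 0 := by
      have := congrFun hz0 m
      simpa [Matrix.mulVec, dotProduct, hM] using this
    calc (∑ i, ∑ j, f i j m)
        = ∑ i, (starRingEnd ℂ (z i) * ((a m : ℂ) * F i m))
            * ∑ j, starRingEnd ℂ (F j m) * z j := by
          refine Finset.sum_congr rfl fun i _ => ?_
          rw [Finset.mul_sum]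
          refine Finset.sum_congr rfl fun j _ => ?_
          rw [hf]; ring
      _ = 0 := by rw [hMz]; simp
  have hquad : star z ⬝ᵥ (Ty Kc y) *ᵥ z = 0 := by rw [e1, e2, e3]
  rcases hdef with hp | hn
  · have := hp.dotProduct_mulVec_pos hzne
    rw [hquad] at this
    exact lt_irrefl 0 this
  · have := hn.dotProduct_mulVec_pos hzne
    rw [Matrix.neg_mulVec, dotProduct_neg, hquad, neg_zero] at this
    exact lt_irrefl 0 this
end
end

section
/- Let K_c ≥ 1 and let w₀ = Σ_{k=0}^{2K_c−1} (−1)^k δ_{2πk/(2K_c)}, a signed measure on 𝕋 consisting of 2K_c alternating-sign Dirac masses at the points 2πk/(2K_c). Then w₀ is a solution of (BPC) for the data y = (ŵ₀[k])_{|k| ≤ K_c}: every finite signed Borel measure w on 𝕋 with ŵ[k] = ŵ₀[k] for all |k| ≤ K_c satisfies ‖w‖ ≥ ‖w₀‖ = 2K_c. -/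
open MeasureTheory Complex Real Matrix
open scoped Real ComplexOrder

noncomputable section

/-- The alternating-sign measure `w₀ = ∑_{k=0}^{2K_c - 1} (-1)^k δ_{2πk/(2K_c)}`. -/
noncomputable def altDiracMeasure (Kc : ℕ) : MeasureTheory.SignedMeasure Circle2pi :=
  ∑ k ∈ Finset.range (2 * Kc),
    ((-1 : ℝ) ^ k) • diracSM (((2 * π * k / (2 * Kc) : ℝ) : Circle2pi))

namespace BPCAux

lemma cont_integrable (f : Circle2pi → ℂ) (hf : Continuous f) (μ : Measure Circle2pi)
    [IsFiniteMeasure μ] : Integrable f μ :=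
  hf.integrable_of_hasCompactSupport (HasCompactSupport.of_compactSpace f)

/-- Integral of a (continuous) function against a signed measure. -/
noncomputable def sInt (w : SignedMeasure Circle2pi) (f : Circle2pi → ℂ) : ℂ :=
  (∫ t, f t ∂w.toJordanDecomposition.posPart) - ∫ t, f t ∂w.toJordanDecomposition.negPart

lemma jordan_add (u v : SignedMeasure Circle2pi) :
    (u + v).toJordanDecomposition.posPart +
      (u.toJordanDecomposition.negPart + v.toJordanDecomposition.negPart) =
    (u + v).toJordanDecomposition.negPart +
      (u.toJordanDecomposition.posPart + v.toJordanDecomposition.posPart) := by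
  have hu : u.toJordanDecomposition.posPart.toSignedMeasure
      - u.toJordanDecomposition.negPart.toSignedMeasure = u :=
    u.toSignedMeasure_toJordanDecomposition
  have hv : v.toJordanDecomposition.posPart.toSignedMeasure
      - v.toJordanDecomposition.negPart.toSignedMeasure = v :=
    v.toSignedMeasure_toJordanDecomposition
  have huv : (u + v).toJordanDecomposition.posPart.toSignedMeasure
      - (u + v).toJordanDecomposition.negPart.toSignedMeasure = u + v :=
    (u + v).toSignedMeasure_toJordanDecomposition
  rw [← Measure.toSignedMeasure_eq_toSignedMeasure_iff]
  rw [Measure.toSignedMeasure_add, Measure.toSignedMeasure_add, Measure.toSignedMeasure_add,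
    Measure.toSignedMeasure_add]
  have key : (u + v).toJordanDecomposition.posPart.toSignedMeasure
      - (u + v).toJordanDecomposition.negPart.toSignedMeasure
      = (u.toJordanDecomposition.posPart.toSignedMeasure
          - u.toJordanDecomposition.negPart.toSignedMeasure)
        + (v.toJordanDecomposition.posPart.toSignedMeasure
          - v.toJordanDecomposition.negPart.toSignedMeasure) := by
    rw [hu, hv, huv]
  rw [sub_eq_iff_eq_add] at key
  rw [key]; abel

lemma integral_eq_of_measure_add_eq {μ₁ ν₁ μ₂ ν₂ : Measure Circle2pi}
    [IsFiniteMeasure μ₁] [IsFiniteMeasure ν₁] [IsFiniteMeasure μ₂] [IsFiniteMeasure ν₂]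
    (h : μ₁ + ν₂ = μ₂ + ν₁) (f : Circle2pi → ℂ) (hf : Continuous f) :
    (∫ t, f t ∂μ₁) - ∫ t, f t ∂ν₁ = (∫ t, f t ∂μ₂) - ∫ t, f t ∂ν₂ := by
  have h1 : (∫ t, f t ∂μ₁) + ∫ t, f t ∂ν₂ = (∫ t, f t ∂μ₂) + ∫ t, f t ∂ν₁ := by
    rw [← integral_add_measure (cont_integrable f hf μ₁) (cont_integrable f hf ν₂),
      ← integral_add_measure (cont_integrable f hf μ₂) (cont_integrable f hf ν₁), h]
  exact sub_eq_sub_iff_add_eq_add.mpr h1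

lemma sInt_add (u v : SignedMeasure Circle2pi) (f : Circle2pi → ℂ) (hf : Continuous f) :
    sInt (u + v) f = sInt u f + sInt v f := by
  unfold sInt
  have h := jordan_add u v
  rw [add_comm ((u + v).toJordanDecomposition.negPart)] at h
  rw [integral_eq_of_measure_add_eq h f hf,
    integral_add_measure (cont_integrable f hf _) (cont_integrable f hf _),
    integral_add_measure (cont_integrable f hf _) (cont_integrable f hf _)]
  ring

lemma sInt_zero (f : Circle2pi → ℂ) : sInt 0 f = 0 := by
  simp [sInt, SignedMeasure.toJordanDecomposition_zero]

lemma sInt_neg (u : SignedMeasure Circle2pi) (f : Circle2pi → ℂ) : sInt (-u) f = -sInt u f := by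
  simp [sInt, SignedMeasure.toJordanDecomposition_neg]

lemma sInt_neg_one_pow (k : ℕ) (u : SignedMeasure Circle2pi) (f : Circle2pi → ℂ) :
    sInt (((-1 : ℝ) ^ k) • u) f = ((-1 : ℝ) ^ k) • sInt u f := by
  rcases Nat.even_or_odd k with h | h
  · rw [h.neg_one_pow, one_smul, one_smul]
  · rw [h.neg_one_pow, neg_one_smul ℝ u, neg_one_smul, sInt_neg]

lemma sInt_sum {ι : Type*} (s : Finset ι) (g : ι → SignedMeasure Circle2pi)
    (f : Circle2pi → ℂ) (hf : Continuous f) :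
    sInt (∑ k ∈ s, g k) f = ∑ k ∈ s, sInt (g k) f := by
  induction s using Finset.cons_induction with
  | empty => simp [sInt_zero]
  | cons k s hk ih => rw [Finset.sum_cons, Finset.sum_cons, sInt_add _ _ f hf, ih]

lemma sInt_dirac (x : Circle2pi) (f : Circle2pi → ℂ) :
    sInt (diracSM x) f = f x := by
  have hj : (JordanDecomposition.mk (Measure.dirac x) 0
      (Measure.MutuallySingular.zero_right)).toSignedMeasure
      = (Measure.dirac x).toSignedMeasure := by
    show (Measure.dirac x).toSignedMeasure - (0 : Measure Circle2pi).toSignedMeasure = _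
    rw [Measure.toSignedMeasure_zero, sub_zero]
  have h2 : ((Measure.dirac x).toSignedMeasure).toJordanDecomposition
      = JordanDecomposition.mk (Measure.dirac x) 0 (Measure.MutuallySingular.zero_right) := by
    rw [← hj, JordanDecomposition.toJordanDecomposition_toSignedMeasure]
  show sInt ((Measure.dirac x).toSignedMeasure) f = f x
  unfold sInt
  rw [h2]
  simp [integral_dirac]

lemma sInt_norm_le (w : SignedMeasure Circle2pi) (f : Circle2pi → ℂ) (C : ℝ)
    (hf : ∀ t, ‖f t‖ ≤ C) :
    ‖sInt w f‖ ≤ C * tvNorm w := by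
  have hp := norm_integral_le_of_norm_le_const (μ := w.toJordanDecomposition.posPart)
    (ae_of_all _ hf)
  have hn := norm_integral_le_of_norm_le_const (μ := w.toJordanDecomposition.negPart)
    (ae_of_all _ hf)
  have htv : tvNorm w
      = (w.toJordanDecomposition.posPart Set.univ).toReal
        + (w.toJordanDecomposition.negPart Set.univ).toReal := by
    rw [tvNorm, SignedMeasure.totalVariation, Measure.add_apply,
      ENNReal.toReal_add (measure_ne_top _ _) (measure_ne_top _ _)]
  calc ‖sInt w f‖ ≤ ‖∫ t, f t ∂w.toJordanDecomposition.posPart‖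
        + ‖∫ t, f t ∂w.toJordanDecomposition.negPart‖ := norm_sub_le _ _
    _ ≤ C * (w.toJordanDecomposition.posPart Set.univ).toReal
        + C * (w.toJordanDecomposition.negPart Set.univ).toReal := add_le_add hp hn
    _ = C * tvNorm w := by rw [htv]; ring

lemma sum_range_two_mul {M : Type*} [AddCommMonoid M] (f : ℕ → M) (n : ℕ) :
    ∑ k ∈ Finset.range (2 * n), f k = ∑ i ∈ Finset.range n, (f (2 * i) + f (2 * i + 1)) := by
  induction n with
  | zero => simp
  | succ n ih =>
    rw [Finset.sum_range_succ, ← ih, Nat.mul_succ,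
      Finset.sum_range_succ, Finset.sum_range_succ]
    ring_nf
    rw [add_assoc]

lemma fourier_pt (Kc : ℕ) (hKc : 1 ≤ Kc) (k : ℕ) :
    fourier (Kc : ℤ) (((2 * π * k / (2 * Kc) : ℝ) : Circle2pi)) = (-1 : ℂ) ^ k := by
  rw [fourier_coe_apply]
  have hKc' : (Kc : ℂ) ≠ 0 := Nat.cast_ne_zero.mpr (by omega)
  have hπ : (π : ℂ) ≠ 0 := by exact_mod_cast Real.pi_ne_zero
  have : 2 * ↑π * I * ↑(Kc : ℤ) * ↑(2 * π * ↑k / (2 * ↑Kc)) / ↑(2 * π)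
      = (k : ℂ) * (π * I) := by
    push_cast
    field_simp
  rw [this, Complex.exp_nat_mul, Complex.exp_pi_mul_I]

lemma fourier_pt_neg (Kc : ℕ) (hKc : 1 ≤ Kc) (k : ℕ) :
    fourier (-(Kc : ℤ)) (((2 * π * k / (2 * Kc) : ℝ) : Circle2pi)) = (-1 : ℂ) ^ k := by
  rw [fourier_coe_apply]
  have hKc' : (Kc : ℂ) ≠ 0 := Nat.cast_ne_zero.mpr (by omega)
  have hπ : (π : ℂ) ≠ 0 := by exact_mod_cast Real.pi_ne_zero
  have : 2 * ↑π * I * ↑(-(Kc : ℤ)) * ↑(2 * π * ↑k / (2 * ↑Kc)) / ↑(2 * π)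
      = (k : ℂ) * (-(π * I)) := by
    push_cast
    field_simp
  rw [this, Complex.exp_nat_mul]
  congr 1
  rw [Complex.exp_neg, Complex.exp_pi_mul_I]
  norm_num

lemma pt_ne (Kc : ℕ) (hKc : 1 ≤ Kc) {j k : ℕ} (hj : j < 2 * Kc) (hk : k < 2 * Kc)
    (hjk : j ≠ k) :
    (((2 * π * j / (2 * Kc) : ℝ) : Circle2pi)) ≠ (((2 * π * k / (2 * Kc) : ℝ) : Circle2pi)) := by
  have hπ := Real.pi_pos
  have hK : (0:ℝ) < 2 * Kc := by positivity
  have hmem : ∀ m : ℕ, m < 2 * Kc → (2 * π * m / (2 * Kc) : ℝ) ∈ Set.Ico (0:ℝ) (0 + 2 * π) := by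
    intro m hm
    constructor
    · positivity
    · rw [zero_add, div_lt_iff₀ hK]
      have : (m : ℝ) < 2 * Kc := by exact_mod_cast hm
      nlinarith
  intro h
  rw [AddCircle.coe_eq_coe_iff_of_mem_Ico (hmem j hj) (hmem k hk)] at h
  have hπ' : (π:ℝ) ≠ 0 := Real.pi_ne_zero
  have hK' : (Kc:ℝ) ≠ 0 := Nat.cast_ne_zero.mpr (by omega)
  field_simp at h
  exact hjk (by exact_mod_cast h)

noncomputable def pt (Kc k : ℕ) : Circle2pi := ((2 * π * k / (2 * Kc) : ℝ) : Circle2pi)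

lemma isFiniteMeasure_finset_sum {ι : Type*} (s : Finset ι) (μ : ι → Measure Circle2pi)
    [∀ i, IsFiniteMeasure (μ i)] : IsFiniteMeasure (∑ i ∈ s, μ i) := by
  constructor
  rw [Measure.finset_sum_apply]
  exact ENNReal.sum_lt_top.mpr fun i _ => measure_lt_top _ _

lemma toSignedMeasure_finset_sum {ι : Type*} (s : Finset ι) (μ : ι → Measure Circle2pi)
    [∀ i, IsFiniteMeasure (μ i)] :
    haveI := isFiniteMeasure_finset_sum s μ
    (∑ i ∈ s, μ i).toSignedMeasure = ∑ i ∈ s, (μ i).toSignedMeasure := by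
  haveI := isFiniteMeasure_finset_sum s μ
  apply MeasureTheory.VectorMeasure.ext
  intro A hA
  have hcoe : ⇑(∑ i ∈ s, (μ i).toSignedMeasure) = ∑ i ∈ s, ⇑((μ i).toSignedMeasure) :=
    map_sum (FunLike.coeAddMonoidHom (SignedMeasure Circle2pi) (Set Circle2pi) ℝ) _ s
  rw [Measure.toSignedMeasure_apply_measurable hA, measureReal_def, Measure.finset_sum_apply,
    ENNReal.toReal_sum (fun i _ => measure_ne_top _ _), hcoe, Finset.sum_apply]
  exact Finset.sum_congr rfl fun i _ =>
    (Measure.toSignedMeasure_apply_measurable hA).symm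

noncomputable def posM (Kc : ℕ) : Measure Circle2pi :=
  ∑ i ∈ Finset.range Kc, Measure.dirac (pt Kc (2 * i))

noncomputable def negM (Kc : ℕ) : Measure Circle2pi :=
  ∑ i ∈ Finset.range Kc, Measure.dirac (pt Kc (2 * i + 1))

instance (Kc : ℕ) : IsFiniteMeasure (posM Kc) := isFiniteMeasure_finset_sum _ _
instance (Kc : ℕ) : IsFiniteMeasure (negM Kc) := isFiniteMeasure_finset_sum _ _

lemma mutuallySingular_posM_negM (Kc : ℕ) (hKc : 1 ≤ Kc) : posM Kc ⟂ₘ negM Kc := by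
  set S : Set Circle2pi := ↑((Finset.range Kc).image (fun i => pt Kc (2 * i + 1)))
  have hS : MeasurableSet S := (Finset.finite_toSet _).measurableSet
  refine ⟨S, hS, ?_, ?_⟩
  · have : (posM Kc) S = ∑ i ∈ Finset.range Kc, (Measure.dirac (pt Kc (2 * i))) S :=
      Measure.finset_sum_apply _ _ _
    rw [this]
    refine Finset.sum_eq_zero fun i hi => ?_
    rw [Measure.dirac_apply' _ hS]
    apply Set.indicator_of_notMem
    simp only [S, Finset.coe_image, Set.mem_image, Finset.mem_coe, Finset.mem_range]
    rintro ⟨j, hj, hji⟩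
    have hi' : i < Kc := Finset.mem_range.mp hi
    exact pt_ne Kc hKc (by omega) (by omega) (by omega) hji
  · have : (negM Kc) Sᶜ = ∑ i ∈ Finset.range Kc, (Measure.dirac (pt Kc (2 * i + 1))) Sᶜ :=
      Measure.finset_sum_apply _ _ _
    rw [this]
    refine Finset.sum_eq_zero fun i hi => ?_
    rw [Measure.dirac_apply' _ hS.compl]
    apply Set.indicator_of_notMem
    simp only [Set.notMem_compl_iff, S, Finset.coe_image, Set.mem_image, Finset.mem_coe]
    exact ⟨i, by simpa using hi, rfl⟩

noncomputable def jd (Kc : ℕ) (hKc : 1 ≤ Kc) : JordanDecomposition Circle2pi :=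
  ⟨posM Kc, negM Kc, mutuallySingular_posM_negM Kc hKc⟩

lemma jd_toSignedMeasure (Kc : ℕ) (hKc : 1 ≤ Kc) :
    (jd Kc hKc).toSignedMeasure = altDiracMeasure Kc := by
  show (posM Kc).toSignedMeasure - (negM Kc).toSignedMeasure = _
  have hp : (posM Kc).toSignedMeasure
      = ∑ i ∈ Finset.range Kc, (Measure.dirac (pt Kc (2 * i))).toSignedMeasure :=
    toSignedMeasure_finset_sum _ _
  have hn : (negM Kc).toSignedMeasure
      = ∑ i ∈ Finset.range Kc, (Measure.dirac (pt Kc (2 * i + 1))).toSignedMeasure :=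
    toSignedMeasure_finset_sum _ _
  rw [hp, hn, altDiracMeasure, sum_range_two_mul, ← Finset.sum_sub_distrib]
  refine Finset.sum_congr rfl fun i _ => ?_
  have he : ((-1 : ℝ) ^ (2 * i)) = 1 := by
    rw [pow_mul]; norm_num
  have ho : ((-1 : ℝ) ^ (2 * i + 1)) = -1 := by
    rw [pow_succ, pow_mul]; norm_num
  rw [he, ho, one_smul, neg_one_smul ℝ (diracSM (((2 * π * ↑(2 * i + 1) / (2 * Kc) : ℝ) : Circle2pi)))]
  rfl

lemma altDiracMeasure_toJordan (Kc : ℕ) (hKc : 1 ≤ Kc) :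
    (altDiracMeasure Kc).toJordanDecomposition = jd Kc hKc := by
  rw [← jd_toSignedMeasure Kc hKc, JordanDecomposition.toJordanDecomposition_toSignedMeasure]

lemma tv_altDirac (Kc : ℕ) (hKc : 1 ≤ Kc) :
    tvNorm (altDiracMeasure Kc) = 2 * Kc := by
  rw [tvNorm, SignedMeasure.totalVariation, altDiracMeasure_toJordan Kc hKc]
  show (((posM Kc) + (negM Kc)) Set.univ).toReal = _
  have hval : ∀ pts : ℕ → Circle2pi,
      ((∑ i ∈ Finset.range Kc, Measure.dirac (pts i)) Set.univ) = Kc := by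
    intro pts
    rw [Measure.finset_sum_apply]
    simp [Measure.dirac_apply_of_mem (Set.mem_univ _)]
  rw [Measure.add_apply, posM, negM, hval, hval]
  rw [← Nat.cast_add, ENNReal.toReal_natCast]
  push_cast
  ring

/-- The dual certificate: `2 cos (K_c t)` as the sum of two Fourier characters. -/
noncomputable def gfun (Kc : ℕ) : Circle2pi → ℂ :=
  fun t => fourier (-(Kc : ℤ)) t + fourier (Kc : ℤ) t

lemma gfun_continuous (Kc : ℕ) : Continuous (gfun Kc) :=
  ((fourier (-(Kc : ℤ))).continuous).add ((fourier (Kc : ℤ)).continuous)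

lemma gfun_bound (Kc : ℕ) (t : Circle2pi) : ‖gfun Kc t‖ ≤ 2 := by
  have h1 : ‖fourier (-(Kc : ℤ)) t‖ = 1 := Circle.norm_coe _
  have h2 : ‖fourier (Kc : ℤ) t‖ = 1 := Circle.norm_coe _
  calc ‖gfun Kc t‖ ≤ ‖fourier (-(Kc : ℤ)) t‖ + ‖fourier (Kc : ℤ) t‖ := norm_add_le _ _
    _ = 2 := by rw [h1, h2]; norm_num

lemma sInt_fun_add (w : SignedMeasure Circle2pi) (f h : Circle2pi → ℂ)
    (hf : Continuous f) (hh : Continuous h) :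
    sInt w (fun t => f t + h t) = sInt w f + sInt w h := by
  unfold sInt
  rw [integral_add (cont_integrable f hf _) (cont_integrable h hh _),
    integral_add (cont_integrable f hf _) (cont_integrable h hh _)]
  ring

lemma coeff_sum_eq_sInt (Kc : ℕ) (w : SignedMeasure Circle2pi) :
    sFourierCoeff w (Kc : ℤ) + sFourierCoeff w (-(Kc : ℤ)) = sInt w (gfun Kc) := by
  have h1 : sFourierCoeff w (Kc : ℤ) = sInt w (fun t => fourier (-(Kc : ℤ)) t) := rfl
  have h2 : sFourierCoeff w (-(Kc : ℤ)) = sInt w (fun t => fourier (Kc : ℤ) t) := by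
    show _ - _ = _
    simp only [neg_neg]
    rfl
  rw [h1, h2, ← sInt_fun_add w _ _ ((fourier (-(Kc : ℤ))).continuous)
    ((fourier (Kc : ℤ)).continuous)]
  rfl

lemma sInt_altDirac_gfun (Kc : ℕ) (hKc : 1 ≤ Kc) :
    sInt (altDiracMeasure Kc) (gfun Kc) = ((4 * Kc : ℝ) : ℂ) := by
  rw [altDiracMeasure, sInt_sum _ _ _ (gfun_continuous Kc)]
  have hterm : ∀ k ∈ Finset.range (2 * Kc),
      sInt (((-1 : ℝ) ^ k) • diracSM (((2 * π * k / (2 * Kc) : ℝ) : Circle2pi))) (gfun Kc)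
        = (2 : ℂ) := by
    intro k _
    rw [sInt_neg_one_pow, sInt_dirac]
    have hg : gfun Kc (((2 * π * k / (2 * Kc) : ℝ) : Circle2pi))
        = (-1 : ℂ) ^ k + (-1 : ℂ) ^ k := by
      rw [gfun, fourier_pt Kc hKc k, fourier_pt_neg Kc hKc k]
    rw [hg, Complex.real_smul]
    push_cast
    have : ((-1 : ℂ) ^ k) * ((-1 : ℂ) ^ k) = 1 := by
      rw [← pow_add]
      exact Even.neg_one_pow ⟨k, rfl⟩
    calc (-1 : ℂ) ^ k * ((-1 : ℂ) ^ k + (-1 : ℂ) ^ k)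
        = 2 * (((-1 : ℂ) ^ k) * ((-1 : ℂ) ^ k)) := by ring
      _ = 2 := by rw [this]; norm_num
  rw [Finset.sum_congr rfl hterm, Finset.sum_const, Finset.card_range]
  push_cast
  ring

end BPCAux

/-- The alternating measure `w₀` of `2 K_c` Dirac masses is a solution of (BPC) for the
data `y = (ŵ₀[k])_{|k| ≤ K_c}`: any signed measure with the same Fourier coefficients up
to order `K_c` has total variation norm at least `‖w₀‖ = 2 K_c`. -/
theorem altDiracMeasure_is_BPC_solution (Kc : ℕ) (hKc : 1 ≤ Kc) :
    tvNorm (altDiracMeasure Kc) = 2 * Kc ∧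
    ∀ w : MeasureTheory.SignedMeasure Circle2pi,
      (∀ k : ℤ, |k| ≤ (Kc : ℤ) →
        sFourierCoeff w k = sFourierCoeff (altDiracMeasure Kc) k) →
      tvNorm (altDiracMeasure Kc) ≤ tvNorm w := by
  refine ⟨BPCAux.tv_altDirac Kc hKc, fun w hw => ?_⟩
  have hK1 : |(Kc : ℤ)| ≤ (Kc : ℤ) := by simp
  have hK2 : |(-(Kc : ℤ))| ≤ (Kc : ℤ) := by simp
  have hsum : BPCAux.sInt w (BPCAux.gfun Kc) = BPCAux.sInt (altDiracMeasure Kc) (BPCAux.gfun Kc) := by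
    rw [← BPCAux.coeff_sum_eq_sInt, ← BPCAux.coeff_sum_eq_sInt, hw _ hK1, hw _ hK2]
  have hval : ‖BPCAux.sInt w (BPCAux.gfun Kc)‖ = 4 * Kc := by
    rw [hsum, BPCAux.sInt_altDirac_gfun Kc hKc, Complex.norm_real]
    rw [Real.norm_of_nonneg (by positivity)]
  have hle : ‖BPCAux.sInt w (BPCAux.gfun Kc)‖ ≤ 2 * tvNorm w :=
    BPCAux.sInt_norm_le w (BPCAux.gfun Kc) 2 (BPCAux.gfun_bound Kc)
  rw [BPCAux.tv_altDirac Kc hKc]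
  rw [hval] at hle
  linarith
end
end
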